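/- Let P₁ = δ_{-a} and P₂ = δ_a with a > 0, and let E denote the energy distance. Among distributions of the form P = (1/2)δ_{-b} + (1/2)δ_b with b ≥ 0, the sum E(P,P₁) + E(P,P₂) is minimized at b = a, not at b = 0. In particular, the energy-distance barycenter of δ_{-a} and δ_a is not δ_0. -/

import Mathlib

open MeasureTheory

/-- The energy distance between two measures on ℝ:
`E(P,Q) = 2 E|X-Y| - E|X-X'| - E|Y-Y'|`. -/
noncomputable def energyDist (P Q : Measure ℝ) : ℝ :=
  2 * (∫ x, ∫ y, |x - y| ∂Q ∂P) - (∫ x, ∫ y, |x - y| ∂P ∂P) -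
    ∫ x, ∫ y, |x - y| ∂Q ∂Q

/-- Two-point symmetric distribution `(1/2)δ_{-b} + (1/2)δ_b`. -/
noncomputable def twoPoint (b : ℝ) : Measure ℝ :=
  (2 : ENNReal)⁻¹ • Measure.dirac (-b) + (2 : ENNReal)⁻¹ • Measure.dirac b

lemma integrable_dirac_aux (f : ℝ → ℝ) (hf : Measurable f) (a : ℝ) :
    Integrable f (Measure.dirac a) := by
  refine ⟨hf.aestronglyMeasurable, ?_⟩
  simp [HasFiniteIntegral, lintegral_dirac]

lemma integral_twoPoint (b : ℝ) (f : ℝ → ℝ) (hf : Measurable f) :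
    ∫ x, f x ∂twoPoint b = 2⁻¹ * f (-b) + 2⁻¹ * f b := by
  rw [twoPoint, integral_add_measure
      ((integrable_dirac_aux f hf (-b)).smul_measure (by norm_num))
      ((integrable_dirac_aux f hf b).smul_measure (by norm_num)),
    integral_smul_measure, integral_smul_measure, integral_dirac, integral_dirac]
  norm_num

lemma energyDist_twoPoint_dirac (b c : ℝ) (hb : 0 ≤ b) :
    energyDist (twoPoint b) (Measure.dirac c) = 2⁻¹ * (|b + c| + |b - c|) * 2 - b := by
  have h1 : ∀ x : ℝ, ∫ y, |x - y| ∂Measure.dirac c = |x - c| := fun x =>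
    integral_dirac (fun y => |x - y|) c
  have hmeas : ∀ c : ℝ, Measurable fun x : ℝ => |x - c| := fun c =>
    (measurable_id.sub measurable_const).abs
  have hA : (∫ x, ∫ y, |x - y| ∂Measure.dirac c ∂twoPoint b) = 2⁻¹ * |(-b) - c| + 2⁻¹ * |b - c| := by
    simp_rw [h1]
    exact integral_twoPoint b _ (hmeas c)
  have hinner : ∀ x : ℝ, ∫ y, |x - y| ∂twoPoint b = 2⁻¹ * |x - (-b)| + 2⁻¹ * |x - b| := by
    intro x
    exact integral_twoPoint b (fun y => |x - y|) ((measurable_const.sub measurable_id).abs)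
  have hB : (∫ x, ∫ y, |x - y| ∂twoPoint b ∂twoPoint b) = b := by
    simp_rw [hinner]
    rw [integral_twoPoint b (fun x => 2⁻¹ * |x - -b| + 2⁻¹ * |x - b|) (((hmeas (-b)).const_mul _).add ((hmeas b).const_mul _))]
    have e1 : |(-b) - -b| = 0 := by simp
    have e2 : |b - b| = 0 := by simp
    have e3 : |(-b) - b| = 2*b := by rw [abs_of_nonpos (by linarith)]; ring
    have e4 : |b - -b| = 2*b := by rw [abs_of_nonneg (by linarith)]; ring
    rw [e1, e2, e3, e4]; ring
  have hC : (∫ x, ∫ y, |x - y| ∂Measure.dirac c ∂Measure.dirac c) = 0 := by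
    rw [integral_dirac]
    simp [h1]
  rw [energyDist, hA, hB, hC]
  have : |(-b) - c| = |b + c| := by rw [← abs_neg]; ring_nf
  rw [this]; ring

theorem energy_barycenter_two_point (a : ℝ) (ha : 0 < a) :
    (∀ b : ℝ, 0 ≤ b →
      energyDist (twoPoint a) (Measure.dirac (-a)) + energyDist (twoPoint a) (Measure.dirac a)
        ≤ energyDist (twoPoint b) (Measure.dirac (-a)) +
            energyDist (twoPoint b) (Measure.dirac a)) ∧
    energyDist (twoPoint a) (Measure.dirac (-a)) + energyDist (twoPoint a) (Measure.dirac a)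
      < energyDist (twoPoint 0) (Measure.dirac (-a)) +
          energyDist (twoPoint 0) (Measure.dirac a) := by
  have key : ∀ b : ℝ, 0 ≤ b →
      energyDist (twoPoint b) (Measure.dirac (-a)) + energyDist (twoPoint b) (Measure.dirac a)
      = 2 * |b - a| + 2 * a := by
    intro b hb
    rw [energyDist_twoPoint_dirac b (-a) hb, energyDist_twoPoint_dirac b a hb]
    have h1 : |b + -a| = |b - a| := by ring_nf
    have h2 : |b - -a| = b + a := by
      rw [abs_of_nonneg (by linarith)]; ring
    have h3 : |b + a| = b + a := abs_of_nonneg (by linarith)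
    rw [h1, h2, h3]; ring
  constructor
  · intro b hb
    rw [key a ha.le, key b hb]
    have : |a - a| = 0 := by simp
    rw [this]
    have := abs_nonneg (b - a)
    linarith
  · rw [key a ha.le, key 0 le_rfl]
    have : |a - a| = 0 := by simp
    rw [this]
    rw [abs_of_nonpos (by linarith), ]
    linarith
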